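/- Define E(n) = (Σ_{ℓ even, 0 ≤ ℓ ≤ n} C_{n-ℓ}C_ℓ) / (Σ_{ℓ=0}^{n} C_{n-ℓ}C_ℓ). Then E(2m) is a non-increasing sequence in m. -/

import Mathlib

open Finset

/-- The even part of the Catalan convolution of total index n, as a fraction of the
full convolution. -/
noncomputable def catalanEvenPart (n : ℕ) : ℚ :=
  (∑ ℓ ∈ (Finset.range (n + 1)).filter (fun ℓ => Even ℓ),
      ((catalan (n - ℓ) : ℚ) * (catalan ℓ : ℚ))) /
    (∑ ℓ ∈ Finset.range (n + 1), ((catalan (n - ℓ) : ℚ) * (catalan ℓ : ℚ)))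

private noncomputable def c (n : ℕ) : ℚ := (catalan n : ℚ)

private lemma c_def (n : ℕ) : c n = (catalan n : ℚ) := rfl

private lemma c_pos (n : ℕ) : 0 < c n := by
  simp only [c_def]
  have h := succ_mul_catalan_eq_centralBinom n
  have h1 : catalan n ≠ 0 := by
    intro h0
    rw [h0, mul_zero] at h
    exact Nat.centralBinom_ne_zero n h.symm
  have : 0 < catalan n := Nat.pos_of_ne_zero h1
  exact_mod_cast this

private lemma cat_ratio (n : ℕ) : ((n : ℚ) + 2) * c (n + 1) = 2 * (2 * n + 1) * c n := by
  simp only [c_def]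
  have h1 := congrArg (Nat.cast : ℕ → ℚ) (succ_mul_catalan_eq_centralBinom n)
  have h2 := congrArg (Nat.cast : ℕ → ℚ) (succ_mul_catalan_eq_centralBinom (n + 1))
  have h3 := congrArg (Nat.cast : ℕ → ℚ) (Nat.succ_mul_centralBinom_succ n)
  push_cast at h1 h2 h3
  have hn : ((n : ℚ) + 1) ≠ 0 := by positivity
  apply mul_left_cancel₀ hn
  nlinarith [h1, h2, h3]

private lemma cat_ratio2 (k : ℕ) :
    ((k : ℚ) + 1) * (2 * k + 3) * c (2 * k + 2) = 2 * (4 * k + 1) * (4 * k + 3) * c (2 * k) := by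
  have h1 := cat_ratio (2 * k)
  have h2 := cat_ratio (2 * k + 1)
  push_cast at h1 h2
  have hc : c (2 * k + 1) ≠ 0 := (c_pos _).ne'
  apply mul_left_cancel₀ hc
  linear_combination (4 * (k : ℚ) + 3) * c (2 * k + 1) * h1
    + ((k : ℚ) + 1) * c (2 * k + 1) * h2

/-- The WZ certificate multiple: `G m k = R m k * c (2*(m+1-k)) * c (2*k)` where
`R m k = k*(4k^2 - 6(m+1)k - (3m+4)) / ((m+1)(2m+3))`, written without subtraction. -/
private noncomputable def R (m k : ℕ) : ℚ :=
  ((k : ℚ) * (4 * k ^ 2 - 6 * ((m : ℚ) + 1) * k - (3 * m + 4))) / (((m : ℚ) + 1) * (2 * m + 3))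

private noncomputable def G (m k : ℕ) : ℚ := R m k * c (2 * (m + 1 - k)) * c (2 * k)

/-- The pointwise WZ identity, stated in subtraction-free variables `j, k` with `m = j + k`. -/
private lemma wz (j k : ℕ) :
    R (j + k) (k + 1) * c (2 * j) * c (2 * k + 2) - R (j + k) k * c (2 * j + 2) * c (2 * k)
      = ((j : ℚ) + k + 2) * c (2 * j + 2) * c (2 * k)
        - 8 * (2 * ((j : ℚ) + k) + 1) * c (2 * j) * c (2 * k) := by
  have hj := cat_ratio2 j
  have hk := cat_ratio2 k
  have hj1 : ((j : ℚ) + 1) ≠ 0 := by positivity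
  have hj3 : (2 * (j : ℚ) + 3) ≠ 0 := by positivity
  have hk1 : ((k : ℚ) + 1) ≠ 0 := by positivity
  have hk3 : (2 * (k : ℚ) + 3) ≠ 0 := by positivity
  have hm1 : ((j : ℚ) + k + 1) ≠ 0 := by positivity
  have hm3 : (2 * ((j : ℚ) + k) + 3) ≠ 0 := by positivity
  have e2 : c (2 * j + 2) = 2 * (4 * j + 1) * (4 * j + 3) * c (2 * j)
      / (((j : ℚ) + 1) * (2 * j + 3)) := by
    rw [eq_div_iff (mul_ne_zero hj1 hj3)]
    linear_combination hj
  have e3 : c (2 * k + 2) = 2 * (4 * k + 1) * (4 * k + 3) * c (2 * k)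
      / (((k : ℚ) + 1) * (2 * k + 3)) := by
    rw [eq_div_iff (mul_ne_zero hk1 hk3)]
    linear_combination hk
  rw [e2, e3]
  unfold R
  push_cast
  field_simp
  ring

private noncomputable def S (m : ℕ) : ℚ := ∑ k ∈ range (m + 1), c (2 * (m - k)) * c (2 * k)

private lemma wz' (m k : ℕ) (h : k ≤ m) :
    G m (k + 1) - G m k
      = (((m : ℚ) + 2) * (c (2 * (m + 1 - k)) * c (2 * k))
          - 8 * (2 * (m : ℚ) + 1) * (c (2 * (m - k)) * c (2 * k))) := by
  obtain ⟨j, rfl⟩ : ∃ j, m = j + k := ⟨m - k, by omega⟩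
  have e1 : j + k + 1 - (k + 1) = j := by omega
  have e2 : j + k + 1 - k = j + 1 := by omega
  have e3 : j + k - k = j := by omega
  unfold G
  rw [e1, e2, e3]
  have := wz j k
  push_cast
  have e4 : 2 * (k + 1) = 2 * k + 2 := by ring
  have e5 : 2 * (j + 1) = 2 * j + 2 := by ring
  rw [e4, e5]
  linear_combination this

private lemma key (m : ℕ) : ((m : ℚ) + 2) * S (m + 1) = 8 * (2 * (m : ℚ) + 1) * S m := by
  have tel := Finset.sum_range_sub (fun k => G m k) (m + 1)
  have h0 : G m 0 = 0 := by simp [G, R]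
  have hR : R m (m + 1) = -((m : ℚ) + 2) := by
    unfold R
    rw [div_eq_iff (by positivity)]
    push_cast
    ring
  have htop : G m (m + 1) = -((m : ℚ) + 2) * c (2 * (m + 1)) := by
    unfold G
    rw [hR, Nat.sub_self, mul_zero]
    simp [c_def]
  have A : ∑ k ∈ range (m + 1),
      (((m : ℚ) + 2) * (c (2 * (m + 1 - k)) * c (2 * k))
        - 8 * (2 * (m : ℚ) + 1) * (c (2 * (m - k)) * c (2 * k)))
      = -((m : ℚ) + 2) * c (2 * (m + 1)) := by
    rw [← Finset.sum_congr rfl (fun k hk => wz' m k (by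
      simpa using Nat.lt_succ_iff.mp (Finset.mem_range.mp hk)))]
    rw [tel, h0, htop, sub_zero]
  rw [Finset.sum_sub_distrib, ← Finset.mul_sum, ← Finset.mul_sum] at A
  have e1 : ∑ k ∈ range (m + 1), c (2 * (m + 1 - k)) * c (2 * k)
      = S (m + 1) - c (2 * (m + 1)) := by
    unfold S
    rw [Finset.sum_range_succ (fun k => c (2 * (m + 1 - k)) * c (2 * k)) (m + 1)]
    simp [Nat.sub_self, c_def, catalan_zero]
  rw [e1] at A
  unfold S at A ⊢
  linarith [A]

private lemma Sval (m : ℕ) : S m = 4 ^ m * c m := by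
  induction m with
  | zero => simp [S, c_def]
  | succ m ih =>
    have hm : ((m : ℚ) + 2) ≠ 0 := by positivity
    apply mul_left_cancel₀ hm
    linear_combination key m + 8 * (2 * (m : ℚ) + 1) * ih - 4 ^ (m + 1) * cat_ratio m

private lemma den (n : ℕ) :
    ∑ ℓ ∈ range (n + 1), ((catalan (n - ℓ) : ℚ) * (catalan ℓ : ℚ)) = (catalan (n + 1) : ℚ) := by
  rw [catalan_succ, Fin.sum_univ_eq_sum_range (fun i => catalan i * catalan (n - i))]
  push_cast
  exact (Finset.sum_congr rfl fun ℓ _ => mul_comm _ _).symm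

private lemma num (m : ℕ) :
    ∑ ℓ ∈ (range (2 * m + 1)).filter (fun ℓ => Even ℓ),
      ((catalan (2 * m - ℓ) : ℚ) * (catalan ℓ : ℚ)) = S m := by
  have himg : (range (2 * m + 1)).filter (fun ℓ => Even ℓ)
      = (range (m + 1)).image (fun k => 2 * k) := by
    ext ℓ
    simp only [Finset.mem_filter, Finset.mem_image, Finset.mem_range, Nat.even_iff]
    constructor
    · rintro ⟨h1, h2⟩
      exact ⟨ℓ / 2, by omega, by omega⟩
    · rintro ⟨k, hk, rfl⟩
      omega
  rw [himg, Finset.sum_image (by intro a _ b _ h; simp only at h; omega)]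
  unfold S
  refine Finset.sum_congr rfl fun k hk => ?_
  rw [show 2 * m - 2 * k = 2 * (m - k) from by omega]
  simp [c_def]

private lemma EP (m : ℕ) :
    catalanEvenPart (2 * m) = (4 ^ m * c m) / c (2 * m + 1) := by
  unfold catalanEvenPart
  rw [num, Sval, den]
  rfl

/-- E(2m) is non-increasing in m. -/
theorem catalanEvenPart_even_antitone :
    Antitone (fun m : ℕ => catalanEvenPart (2 * m)) := by
  apply antitone_nat_of_succ_le
  intro m
  show catalanEvenPart (2 * (m + 1)) ≤ catalanEvenPart (2 * m)
  rw [EP m, EP (m + 1)]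
  have h1 : (2 : ℕ) * (m + 1) + 1 = 2 * m + 3 := by ring
  rw [h1]
  rw [div_le_div_iff₀ (c_pos _) (c_pos _)]
  have r1 := cat_ratio m
  have r2 := cat_ratio (2 * m + 1)
  have r3 := cat_ratio (2 * m + 2)
  push_cast at r1 r2 r3
  have hP : (0 : ℚ) < c m * c (2 * m + 1) := mul_pos (c_pos _) (c_pos _)
  have h4 : (0 : ℚ) < 4 ^ m := by positivity
  have hpos : (0 : ℚ) < ((m : ℚ) + 2) * (2 * m + 3) * (2 * m + 4) := by positivity
  rw [← mul_le_mul_iff_of_pos_right hpos]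
  have E1 : 4 ^ (m + 1) * c (m + 1) * c (2 * m + 1) * (((m : ℚ) + 2) * (2 * m + 3) * (2 * m + 4))
      = 4 ^ m * (8 * (2 * (m : ℚ) + 1) * (2 * m + 3) * (2 * m + 4)) * (c m * c (2 * m + 1)) := by
    linear_combination 4 ^ (m + 1) * (2 * (m : ℚ) + 3) * (2 * m + 4) * c (2 * m + 1) * r1
  have E2 : 4 ^ m * c m * c (2 * m + 3) * (((m : ℚ) + 2) * (2 * m + 3) * (2 * m + 4))
      = 4 ^ m * (4 * (4 * (m : ℚ) + 3) * (4 * m + 5) * (m + 2)) * (c m * c (2 * m + 1)) := by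
    linear_combination 4 ^ m * ((m : ℚ) + 2) * c m * ((2 * m + 3) * r3 + 2 * (4 * m + 5) * r2)
  rw [E1, E2]
  have hscal : 8 * (2 * (m : ℚ) + 1) * (2 * m + 3) * (2 * m + 4)
      ≤ 4 * (4 * (m : ℚ) + 3) * (4 * m + 5) * (m + 2) := by nlinarith [sq_nonneg ((m : ℚ))]
  have := mul_le_mul_of_nonneg_right hscal hP.le
  nlinarith [this, h4, hP]
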